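/- (Time derivative of mixture path matches the velocity) With notation as above, let $p_t(x^i) = \sum_{j=1}^m \kappa^j_t w^j(x^i)$ be a one-dimensional conditional path with differentiable schedulers $\kappa^j_t > 0$ summing to 1, and define $u_t(x^i, z^i) = \sum_j a^j_t w^j(x^i) + b_t \delta_{z^i}(x^i)$ with $a^j_t = \dot\kappa^j_t - \kappa^j_t \dot\kappa^\ell_t/\kappa^\ell_t$, $b_t = \dot\kappa^\ell_t/\kappa^\ell_t$, $\ell = \arg\min_j \dot\kappa^j_t/\kappa^j_t$. Then $\dot p_t(x^i) = \sum_{z^i \in [d]} p_t(z^i)\, u_t(x^i, z^i)$. -/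

import Mathlib

open Finset

/-- Theorem 2, single-coordinate continuity equation: the time derivative of the
mixture path `p_t(x) = ∑_j κ_t^j w^j(x)` equals `∑_z p_t(z) u_t(x, z)` with the
velocity `u_t(x,z) = ∑_j a_t^j w^j(x) + b_t δ_z(x)`. -/
theorem mixture_path_continuity (d m : ℕ) (hd : 1 ≤ d) (hm : 1 ≤ m)
    (κ : Fin m → ℝ → ℝ) (dκ : Fin m → ℝ) (w : Fin m → Fin d → ℝ) (t : ℝ)
    (hw0 : ∀ j a, 0 ≤ w j a) (hw1 : ∀ j, ∑ a, w j a = 1)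
    (hderiv : ∀ j, HasDerivAt (κ j) (dκ j) t)
    (hκpos : ∀ j, 0 < κ j t) (hκ1 : ∑ j, κ j t = 1)
    (ℓ : Fin m) (hℓ : ∀ j, dκ ℓ / κ ℓ t ≤ dκ j / κ j t) :
    ∀ x : Fin d,
      HasDerivAt (fun s => ∑ j, κ j s * w j x)
        (∑ z : Fin d, (∑ j, κ j t * w j z) *
          (∑ j, (dκ j - κ j t * (dκ ℓ / κ ℓ t)) * w j x +
            (dκ ℓ / κ ℓ t) * (if x = z then (1 : ℝ) else 0))) t := by
  intro x
  have h : HasDerivAt (fun s => ∑ j, κ j s * w j x) (∑ j, dκ j * w j x) t :=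
    HasDerivAt.fun_sum (fun j _ => (hderiv j).mul_const _)
  set b : ℝ := dκ ℓ / κ ℓ t with hb
  set A : ℝ := ∑ j, (dκ j - κ j t * b) * w j x with hA
  have hzsum : ∑ z : Fin d, ∑ j, κ j t * w j z = 1 := by
    rw [Finset.sum_comm]
    simp only [← Finset.mul_sum, hw1, mul_one]
    exact hκ1
  have hRHS : (∑ z : Fin d, (∑ j, κ j t * w j z) *
      (A + b * (if x = z then (1 : ℝ) else 0)))
      = A + b * ∑ j, κ j t * w j x := by
    simp only [mul_add, Finset.sum_add_distrib, ← Finset.sum_mul, hzsum, one_mul]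
    congr 1
    have : ∀ z : Fin d, (∑ j, κ j t * w j z) * (b * (if x = z then (1 : ℝ) else 0))
        = if z = x then (∑ j, κ j t * w j x) * b else 0 := by
      intro z
      by_cases hzx : z = x
      · simp [hzx, mul_comm]
      · rw [if_neg (fun hxz => hzx hxz.symm), if_neg hzx, mul_zero, mul_zero]
    rw [Finset.sum_congr rfl (fun z _ => this z), Finset.sum_ite_eq']
    simp [mul_comm]
  have hAval : A + b * ∑ j, κ j t * w j x = ∑ j, dκ j * w j x := by
    rw [hA, Finset.mul_sum, ← Finset.sum_add_distrib]
    apply Finset.sum_congr rfl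
    intro j _
    ring
  rw [hRHS, hAval] at *
  exact h
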